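/- Let ‖·‖ be an arbitrary norm on ℝ^m and let v_1, …, v_n ∈ ℝ^m be vectors with ‖v_i‖ ≤ Δ for i = 1, …, n and v_1 + ⋯ + v_n = 0. Then there exists a permutation π of {1, …, n} such that for each k ∈ {1, …, n} the partial sum p_k = Σ_{i=1}^{k} v_{π(i)} satisfies ‖p_k‖ ≤ m·Δ. -/

import Mathlib

namespace SteinitzAux
open Finset

lemma zero_coord {m n : ℕ} (v : Fin n → Fin m → ℝ) (A : Finset (Fin n)) :
    ∀ (t : ℕ) (μ : Fin n → ℝ),
      (A.filter fun i => μ i ≠ 0 ∧ μ i ≠ 1).card ≤ t →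
      (∀ i ∈ A, 0 ≤ μ i ∧ μ i ≤ 1) →
      (∑ i ∈ A, μ i = (A.card : ℝ) - (m + 1)) →
      (∑ i ∈ A, μ i • v i = 0) →
      ∃ μ' : Fin n → ℝ, (∀ i ∈ A, 0 ≤ μ' i ∧ μ' i ≤ 1) ∧
        (∑ i ∈ A, μ' i = (A.card : ℝ) - (m + 1)) ∧
        (∑ i ∈ A, μ' i • v i = 0) ∧ ∃ j ∈ A, μ' j = 0 := by
  classical
  intro t
  induction t with
  | zero =>
    intro μ hcard h01 hsum hvec
    by_cases hz : ∃ j ∈ A, μ j = 0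
    · exact ⟨μ, h01, hsum, hvec, hz⟩
    exfalso
    push_neg at hz
    set F := A.filter fun i => μ i ≠ 0 ∧ μ i ≠ 1 with hF
    have hFsub : F ⊆ A := filter_subset _ _
    have hone : ∀ i ∈ A, i ∉ F → μ i = 1 := by
      intro i hiA hiF
      by_contra h1
      exact hiF (mem_filter.mpr ⟨hiA, hz i hiA, h1⟩)
    have hFempty : F = ∅ := card_eq_zero.mp (Nat.le_zero.mp hcard)
    have : ∑ i ∈ A, μ i = (A.card : ℝ) := by
      rw [Finset.sum_congr rfl (fun i hi => hone i hi (by simp [hFempty]))]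
      simp
    rw [this] at hsum
    have : (m : ℝ) + 1 = 0 := by linarith
    have h0 : (0:ℝ) ≤ m := Nat.cast_nonneg m
    linarith
  | succ t ih =>
    intro μ hcard h01 hsum hvec
    by_cases hz : ∃ j ∈ A, μ j = 0
    · exact ⟨μ, h01, hsum, hvec, hz⟩
    push_neg at hz
    set F := A.filter fun i => μ i ≠ 0 ∧ μ i ≠ 1 with hF
    have hFsub : F ⊆ A := filter_subset _ _
    have hone : ∀ i ∈ A, i ∉ F → μ i = 1 := by
      intro i hiA hiF
      by_contra h1
      exact hiF (mem_filter.mpr ⟨hiA, hz i hiA, h1⟩)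
    have hpos : ∀ i ∈ F, 0 < μ i := fun i hi =>
      lt_of_le_of_ne (h01 i (hFsub hi)).1 (Ne.symm (mem_filter.mp hi).2.1)
    have hlt1 : ∀ i ∈ F, μ i < 1 := fun i hi =>
      lt_of_le_of_ne (h01 i (hFsub hi)).2 (mem_filter.mp hi).2.2
    have hsplit : ∑ i ∈ A, μ i = ∑ i ∈ F, μ i + ((A.card : ℝ) - F.card) := by
      rw [← Finset.sum_sdiff hFsub]
      have h1 : ∑ i ∈ A \ F, μ i = ((A \ F).card : ℝ) := by
        rw [Finset.sum_congr rfl (fun i hi => hone i (mem_sdiff.mp hi).1 (mem_sdiff.mp hi).2)]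
        simp
      rw [h1, card_sdiff_of_subset hFsub]
      rw [Nat.cast_sub (card_le_card hFsub)]
      ring
    have hsumF : ∑ i ∈ F, μ i = (F.card : ℝ) - (m + 1) := by
      rw [hsplit] at hsum; linarith
    have hFne : F.Nonempty := by
      rw [← Finset.card_pos]
      by_contra h
      push_neg at h
      have : F.card = 0 := Nat.le_zero.mp (Nat.lt_succ_iff.mp (Nat.lt_succ_of_le h))
      rw [card_eq_zero.mp this] at hsumF
      simp at hsumF
      have h0 : (0:ℝ) ≤ m := Nat.cast_nonneg m
      linarith
    have hsumFpos : 0 < ∑ i ∈ F, μ i := Finset.sum_pos hpos hFne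
    have hcardF : m + 2 ≤ F.card := by
      have h1 : (m:ℝ) + 1 < F.card := by linarith
      exact_mod_cast (by exact_mod_cast Nat.lt_iff_add_one_le.mp (by exact_mod_cast h1) : m + 1 + 1 ≤ F.card)
    -- linear dependence
    have hnotli : ¬ LinearIndependent ℝ
        (fun i : {x // x ∈ F} => (((1 : ℝ), v i) : ℝ × (Fin m → ℝ))) := by
      intro h
      have h2 := h.fintype_card_le_finrank
      rw [Fintype.card_coe] at h2
      simp [Module.finrank_prod] at h2
      omega
    obtain ⟨g, hg0, i₀, hgi₀⟩ := Fintype.not_linearIndependent_iff.mp hnotli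
    set w : Fin n → ℝ := fun i => if h : i ∈ F then g ⟨i, h⟩ else 0 with hw
    have hwF : ∀ (i : {x // x ∈ F}), w i = g i := fun i => dif_pos i.2
    have hwnF : ∀ i, i ∉ F → w i = 0 := fun i h => dif_neg h
    have hsum1 : ∑ i ∈ F, w i = 0 := by
      have h1 := congrArg Prod.fst hg0
      rw [Prod.fst_sum] at h1
      simp only [Prod.smul_fst, smul_eq_mul, mul_one] at h1
      rw [← Finset.sum_attach F w, ← Finset.univ_eq_attach]
      rw [Finset.sum_congr rfl (fun i _ => hwF i)]
      exact h1
    have hsum2 : ∑ i ∈ F, w i • v i = 0 := by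
      have h1 := congrArg Prod.snd hg0
      rw [Prod.snd_sum] at h1
      simp only [Prod.smul_snd] at h1
      rw [← Finset.sum_attach F (fun i => w i • v i), ← Finset.univ_eq_attach]
      rw [Finset.sum_congr rfl (fun i _ => by rw [hwF i])]
      exact h1
    set S := F.filter fun i => w i ≠ 0 with hS
    have hSne : S.Nonempty := ⟨i₀, mem_filter.mpr ⟨i₀.2, by rw [hwF i₀]; exact hgi₀⟩⟩
    have hSF : S ⊆ F := filter_subset _ _
    set c : Fin n → ℝ := fun i => if 0 < w i then (1 - μ i) / w i else μ i / (-w i) with hc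
    have hcpos : ∀ i ∈ S, 0 < c i := by
      intro i hi
      have hwi : w i ≠ 0 := (mem_filter.mp hi).2
      have hiF := hSF hi
      by_cases h : 0 < w i
      · simp only [hc, if_pos h]
        exact div_pos (by linarith [hlt1 i hiF]) h
      · simp only [hc, if_neg h]
        have : w i < 0 := lt_of_le_of_ne (not_lt.mp h) hwi
        exact div_pos (hpos i hiF) (by linarith)
    set ε := S.inf' hSne c with hε
    obtain ⟨istar, histar, hcistar⟩ := Finset.exists_mem_eq_inf' hSne c
    have hεpos : 0 < ε := by rw [hε, hcistar]; exact hcpos istar histar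
    have hεle : ∀ i ∈ S, ε ≤ c i := fun i hi => Finset.inf'_le c hi
    set μ' : Fin n → ℝ := fun i => μ i + ε * w i with hμ'
    -- bounds for μ'
    have h01' : ∀ i ∈ A, 0 ≤ μ' i ∧ μ' i ≤ 1 := by
      intro i hiA
      by_cases hiF : i ∈ F
      · by_cases hwi : w i = 0
        · simp only [hμ', hwi, mul_zero, add_zero]; exact h01 i hiA
        · have hiS : i ∈ S := mem_filter.mpr ⟨hiF, hwi⟩
          have hεci := hεle i hiS
          by_cases h : 0 < w i
          · constructor
            · have : 0 ≤ ε * w i := le_of_lt (mul_pos hεpos h)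
              simp only [hμ']
              linarith [(hpos i hiF)]
            · have h2 : ε * w i ≤ c i * w i := mul_le_mul_of_nonneg_right hεci (le_of_lt h)
              have h3 : c i * w i = 1 - μ i := by
                simp only [hc, if_pos h]
                exact div_mul_cancel₀ _ hwi
              simp only [hμ']
              linarith
          · have hneg : w i < 0 := lt_of_le_of_ne (not_lt.mp h) hwi
            constructor
            · have h2 : c i * w i ≤ ε * w i := mul_le_mul_of_nonpos_right hεci (le_of_lt hneg)
              have h3 : c i * w i = -μ i := by
                simp only [hc, if_neg h]
                rw [div_neg, neg_mul, div_mul_cancel₀ _ hwi]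
              simp only [hμ']
              linarith
            · have : ε * w i ≤ 0 := le_of_lt (mul_neg_of_pos_of_neg hεpos hneg)
              have := (h01 i hiA).2
              simp only [hμ']
              linarith
      · simp only [hμ', hwnF i hiF, mul_zero, add_zero]
        exact h01 i hiA
    have hwA : ∑ i ∈ A, w i = 0 := by
      rw [← Finset.sum_subset hFsub (fun i _ hi => hwnF i hi)]
      exact hsum1
    have hwvA : ∑ i ∈ A, w i • v i = 0 := by
      rw [← Finset.sum_subset hFsub (fun i _ hi => by rw [hwnF i hi, zero_smul])]
      exact hsum2
    have hsum' : ∑ i ∈ A, μ' i = (A.card : ℝ) - (m + 1) := by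
      simp only [hμ']
      rw [Finset.sum_add_distrib, ← Finset.mul_sum, hwA, mul_zero, add_zero]
      exact hsum
    have hvec' : ∑ i ∈ A, μ' i • v i = 0 := by
      simp only [hμ', add_smul]
      rw [Finset.sum_add_distrib, hvec]
      have : ∑ i ∈ A, (ε * w i) • v i = ε • ∑ i ∈ A, w i • v i := by
        rw [Finset.smul_sum]
        exact Finset.sum_congr rfl (fun i _ => by rw [smul_smul])
      rw [this, hwvA, smul_zero, zero_add]
    have hwistar : w istar ≠ 0 := (mem_filter.mp histar).2
    by_cases hwpos : 0 < w istar
    · -- μ' istar = 1 ; recurse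
      have hμ'istar : μ' istar = 1 := by
        simp only [hμ']; rw [hε, hcistar]; simp only [hc, if_pos hwpos]
        rw [div_mul_cancel₀ _ hwistar]
        ring
      have hFsub' : (A.filter fun i => μ' i ≠ 0 ∧ μ' i ≠ 1) ⊆ F.erase istar := by
        intro i hi
        obtain ⟨hiA, hi0, hi1⟩ := mem_filter.mp hi
        have hiF : i ∈ F := by
          by_contra h
          exact hi1 (by simp only [hμ', hwnF i h, mul_zero, add_zero]; exact hone i hiA h)
        refine mem_erase.mpr ⟨?_, hiF⟩
        intro h; rw [h] at hi1; exact hi1 hμ'istar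
      have hcard' : (A.filter fun i => μ' i ≠ 0 ∧ μ' i ≠ 1).card ≤ t := by
        have h1 := card_le_card hFsub'
        rw [card_erase_of_mem (hSF histar)] at h1
        omega
      exact ih μ' hcard' h01' hsum' hvec'
    · -- μ' istar = 0 ; done
      have hneg : w istar < 0 := lt_of_le_of_ne (not_lt.mp hwpos) hwistar
      have hμ'istar : μ' istar = 0 := by
        simp only [hμ']; rw [hε, hcistar]; simp only [hc, if_neg hwpos]
        rw [div_neg, neg_mul, div_mul_cancel₀ _ hwistar]
        ring
      exact ⟨μ', h01', hsum', hvec', istar, hFsub (hSF histar), hμ'istar⟩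

/-- The invariant: a good coefficient vector for the set `A`. -/
def GoodCoef {m n : ℕ} (v : Fin n → Fin m → ℝ) (A : Finset (Fin n)) : Prop :=
  ∃ μ : Fin n → ℝ, (∀ i ∈ A, 0 ≤ μ i ∧ μ i ≤ 1) ∧
    (∑ i ∈ A, μ i = (A.card : ℝ) - m) ∧ (∑ i ∈ A, μ i • v i = 0)

lemma descent {m n : ℕ} (v : Fin n → Fin m → ℝ) (A : Finset (Fin n))
    (hcard : m < A.card) (hg : GoodCoef v A) :
    ∃ j ∈ A, GoodCoef v (A.erase j) := by
  obtain ⟨μ, h01, hsum, hvec⟩ := hg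
  have hc1 : (1 : ℝ) ≤ (A.card : ℝ) - m := by
    have : (m : ℝ) + 1 ≤ A.card := by exact_mod_cast hcard
    linarith
  have hcne : ((A.card : ℝ) - m) ≠ 0 := by linarith
  set r : ℝ := ((A.card : ℝ) - (m + 1)) / ((A.card : ℝ) - m) with hr
  have hr0 : 0 ≤ r := div_nonneg (by linarith) (by linarith)
  have hr1 : r ≤ 1 := by
    rw [hr, div_le_one (by linarith)]; linarith
  set μ₀ : Fin n → ℝ := fun i => r * μ i with hμ₀
  have h01' : ∀ i ∈ A, 0 ≤ μ₀ i ∧ μ₀ i ≤ 1 := by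
    intro i hi
    obtain ⟨ha, hb⟩ := h01 i hi
    constructor
    · exact mul_nonneg hr0 ha
    · calc r * μ i ≤ 1 * 1 := mul_le_mul hr1 hb ha zero_le_one
        _ = 1 := one_mul 1
  have hsum' : ∑ i ∈ A, μ₀ i = (A.card : ℝ) - (m + 1) := by
    simp only [hμ₀]
    rw [← Finset.mul_sum, hsum, hr, div_mul_cancel₀ _ hcne]
  have hvec' : ∑ i ∈ A, μ₀ i • v i = 0 := by
    simp only [hμ₀]
    have : ∑ i ∈ A, (r * μ i) • v i = r • ∑ i ∈ A, μ i • v i := by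
      rw [Finset.smul_sum]
      exact Finset.sum_congr rfl (fun i _ => by rw [smul_smul])
    rw [this, hvec, smul_zero]
  obtain ⟨μ', h01'', hsum'', hvec'', j, hjA, hj0⟩ :=
    zero_coord v A _ μ₀ le_rfl h01' hsum' hvec'
  refine ⟨j, hjA, μ', fun i hi => h01'' i (erase_subset _ _ hi), ?_, ?_⟩
  · have h1 : ∑ i ∈ A.erase j, μ' i = (∑ i ∈ A, μ' i) - μ' j :=
      (Finset.sum_erase_eq_sub hjA)
    rw [h1, hj0, hsum'', card_erase_of_mem hjA]
    have hA1 : 1 ≤ A.card := by omega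
    rw [Nat.cast_sub hA1]
    push_cast
    ring
  · have h1 : ∑ i ∈ A.erase j, μ' i • v i = (∑ i ∈ A, μ' i • v i) - μ' j • v j :=
      (Finset.sum_erase_eq_sub hjA)
    rw [h1, hj0, hvec'', zero_smul, sub_zero]

lemma steinitz_norm_sum_le {m n : ℕ} (N : (Fin m → ℝ) → ℝ) (h0 : N 0 = 0)
    (hadd : ∀ x y, N (x + y) ≤ N x + N y)
    (A : Finset (Fin n)) (f : Fin n → Fin m → ℝ) :
    N (∑ i ∈ A, f i) ≤ ∑ i ∈ A, N (f i) := by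
  classical
  induction A using Finset.induction_on with
  | empty => simp [h0]
  | @insert a s hx ih =>
    rw [Finset.sum_insert hx, Finset.sum_insert hx]
    exact le_trans (hadd _ _) (by linarith)



lemma bound_good {m n : ℕ} (N : (Fin m → ℝ) → ℝ) (h0 : N 0 = 0)
    (hN_nonneg : ∀ x, 0 ≤ N x)
    (hN_smul : ∀ (c : ℝ) (x : Fin m → ℝ), N (c • x) = |c| * N x)
    (hN_add : ∀ x y : Fin m → ℝ, N (x + y) ≤ N x + N y)
    (Δ : ℝ) (v : Fin n → Fin m → ℝ) (hv : ∀ i, N (v i) ≤ Δ)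
    (A : Finset (Fin n)) (hg : GoodCoef v A) :
    N (∑ i ∈ A, v i) ≤ (m : ℝ) * Δ := by
  obtain ⟨μ, h01, hsum, hvec⟩ := hg
  have key : ∑ i ∈ A, v i = ∑ i ∈ A, (1 - μ i) • v i := by
    have h1 : ∀ i ∈ A, (1 - μ i) • v i = v i - μ i • v i := by
      intro i _; rw [sub_smul, one_smul]
    rw [Finset.sum_congr rfl h1, Finset.sum_sub_distrib, hvec, sub_zero]
  rw [key]
  calc N (∑ i ∈ A, (1 - μ i) • v i) ≤ ∑ i ∈ A, N ((1 - μ i) • v i) :=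
        steinitz_norm_sum_le N h0 hN_add A _
    _ = ∑ i ∈ A, (1 - μ i) * N (v i) := by
        refine Finset.sum_congr rfl (fun i hi => ?_)
        rw [hN_smul, abs_of_nonneg (by linarith [(h01 i hi).2])]
    _ ≤ ∑ i ∈ A, (1 - μ i) * Δ := by
        refine Finset.sum_le_sum (fun i hi => ?_)
        exact mul_le_mul_of_nonneg_left (hv i) (by linarith [(h01 i hi).2])
    _ = ((A.card : ℝ) - ∑ i ∈ A, μ i) * Δ := by
        rw [← Finset.sum_mul, Finset.sum_sub_distrib, Finset.sum_const, nsmul_eq_mul, mul_one]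
    _ = (m : ℝ) * Δ := by rw [hsum]; ring

lemma bound_triv {m n : ℕ} (N : (Fin m → ℝ) → ℝ) (h0 : N 0 = 0)
    (hN_add : ∀ x y : Fin m → ℝ, N (x + y) ≤ N x + N y)
    (Δ : ℝ) (hΔ : 0 ≤ Δ) (v : Fin n → Fin m → ℝ) (hv : ∀ i, N (v i) ≤ Δ)
    (A : Finset (Fin n)) (hA : A.card ≤ m) :
    N (∑ i ∈ A, v i) ≤ (m : ℝ) * Δ := by
  calc N (∑ i ∈ A, v i) ≤ ∑ i ∈ A, N (v i) := steinitz_norm_sum_le N h0 hN_add A _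
    _ ≤ ∑ _i ∈ A, Δ := Finset.sum_le_sum (fun i _ => hv i)
    _ = (A.card : ℝ) * Δ := by rw [Finset.sum_const, nsmul_eq_mul]
    _ ≤ (m : ℝ) * Δ := by
        apply mul_le_mul_of_nonneg_right _ hΔ
        exact_mod_cast hA

lemma chain {m n : ℕ} (v : Fin n → Fin m → ℝ)
    (hbase : m ≤ n → GoodCoef v Finset.univ) :
    ∀ J, J ≤ n → ∃ B : ℕ → Finset (Fin n),
      B 0 = Finset.univ ∧
      (∀ j, j < J → B (j+1) ⊆ B j) ∧
      (∀ j, j ≤ J → (B j).card = n - j) ∧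
      (∀ j, j ≤ J → m ≤ n - j → GoodCoef v (B j)) := by
  intro J
  induction J with
  | zero =>
    intro _
    refine ⟨fun _ => Finset.univ, rfl, fun j hj => absurd hj (Nat.not_lt_zero j), ?_, ?_⟩
    · intro j hj
      obtain rfl : j = 0 := Nat.le_zero.mp hj
      simp
    · intro j hj hm
      obtain rfl : j = 0 := Nat.le_zero.mp hj
      exact hbase (by omega)
  | succ J ih =>
    intro hJn
    obtain ⟨B, hB0, hmono, hcard, hgood⟩ := ih (by omega)
    have hAne : (B J).Nonempty := by
      rw [← Finset.card_pos, hcard J le_rfl]; omega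
    obtain ⟨j₀, hj₀A, hg'⟩ :
        ∃ j ∈ B J, (m ≤ n - (J + 1) → GoodCoef v ((B J).erase j)) := by
      by_cases hm : m ≤ n - (J + 1)
      · have hlt : m < (B J).card := by rw [hcard J le_rfl]; omega
        obtain ⟨j₀, hj₀, hgood'⟩ := descent v (B J) hlt (hgood J le_rfl (by omega))
        exact ⟨j₀, hj₀, fun _ => hgood'⟩
      · obtain ⟨j₀, hj₀⟩ := hAne
        exact ⟨j₀, hj₀, fun h => absurd h hm⟩
    refine ⟨fun i => if i ≤ J then B i else (B J).erase j₀, ?_, ?_, ?_, ?_⟩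
    · simp only [Nat.zero_le, if_pos]; exact hB0
    · intro j hj
      by_cases h : j < J
      · simp only [if_pos (by omega : j + 1 ≤ J), if_pos (by omega : j ≤ J)]
        exact hmono j h
      · obtain rfl : j = J := by omega
        simp only [if_neg (show ¬ j + 1 ≤ j by omega), if_pos (le_refl j)]
        exact erase_subset _ _
    · intro j hj
      by_cases h : j ≤ J
      · simp only [if_pos h]; exact hcard j h
      · obtain hjJ : j = J + 1 := by omega
        subst hjJ
        simp only [if_neg (show ¬ J + 1 ≤ J by omega)]
        rw [card_erase_of_mem hj₀A, hcard J le_rfl]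
        omega
    · intro j hj hm
      by_cases h : j ≤ J
      · simp only [if_pos h]; exact hgood j h (by omega)
      · obtain hjJ : j = J + 1 := by omega
        subst hjJ
        simp only [if_neg (show ¬ J + 1 ≤ J by omega)]
        exact hg' hm

end SteinitzAux

open Finset SteinitzAux



/-- **Steinitz Lemma.** For an arbitrary norm `N` on `ℝ^m` and vectors
`v 1, …, v n` with `N (v i) ≤ Δ` summing to zero, there is a reordering such
that every partial sum has norm at most `m * Δ`. -/
theorem steinitz_lemma (m n : ℕ) (N : (Fin m → ℝ) → ℝ)
    (hN_nonneg : ∀ x, 0 ≤ N x)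
    (hN_eq_zero : ∀ x, N x = 0 ↔ x = 0)
    (hN_smul : ∀ (c : ℝ) (x : Fin m → ℝ), N (c • x) = |c| * N x)
    (hN_add : ∀ x y : Fin m → ℝ, N (x + y) ≤ N x + N y)
    (Δ : ℝ) (v : Fin n → Fin m → ℝ)
    (hv : ∀ i, N (v i) ≤ Δ)
    (hsum : ∑ i, v i = 0) :
    ∃ π : Equiv.Perm (Fin n), ∀ k : Fin n,
      N (∑ i ∈ Finset.univ.filter (fun i => i ≤ k), v (π i)) ≤ (m : ℝ) * Δ := by
  classical
  rcases Nat.eq_zero_or_pos n with hn | hn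
  · subst hn
    exact ⟨Equiv.refl _, fun k => k.elim0⟩
  have h0 : N 0 = 0 := (hN_eq_zero 0).mpr rfl
  have hΔ : 0 ≤ Δ := le_trans (hN_nonneg (v ⟨0, hn⟩)) (hv ⟨0, hn⟩)
  have hn' : (0 : ℝ) < n := by exact_mod_cast hn
  have hbase : m ≤ n → GoodCoef v Finset.univ := by
    intro hmn
    have hmn' : (m : ℝ) ≤ n := by exact_mod_cast hmn
    have hm0 : (0 : ℝ) ≤ m := Nat.cast_nonneg m
    refine ⟨fun _ => ((n : ℝ) - m) / n, ?_, ?_, ?_⟩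
    · intro i _
      constructor
      · exact div_nonneg (by linarith) (le_of_lt hn')
      · rw [div_le_one hn']; linarith
    · rw [Finset.sum_const, card_univ, Fintype.card_fin, nsmul_eq_mul]
      field_simp
    · rw [← Finset.smul_sum, hsum, smul_zero]
  obtain ⟨B, hB0, hmono, hcard, hgood⟩ := chain v hbase n le_rfl
  have hanti : ∀ i j, i ≤ j → j ≤ n → B j ⊆ B i := by
    intro i j hij hjn
    induction j with
    | zero =>
      obtain rfl : i = 0 := Nat.le_zero.mp hij
      exact subset_rfl
    | succ j ihj =>
      rcases Nat.lt_or_ge i (j + 1) with h | h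
      · exact (hmono j (by omega)).trans (ihj (by omega) (by omega))
      · obtain rfl : i = j + 1 := by omega
        exact subset_rfl
  have hstep : ∀ k : Fin n, ∃ a, B (n - ((k : ℕ) + 1)) \ B (n - (k : ℕ)) = {a} := by
    intro k
    have hk := k.isLt
    have hsub : B (n - (k : ℕ)) ⊆ B (n - ((k : ℕ) + 1)) := hanti _ _ (by omega) (by omega)
    have hcard1 : (B (n - ((k : ℕ) + 1)) \ B (n - (k : ℕ))).card = 1 := by
      rw [card_sdiff_of_subset hsub, hcard _ (by omega), hcard _ (by omega)]
      omega
    exact card_eq_one.mp hcard1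
  choose π₀ hπ₀ using hstep
  have hπmem : ∀ k : Fin n, π₀ k ∈ B (n - ((k : ℕ) + 1)) ∧ π₀ k ∉ B (n - (k : ℕ)) := by
    intro k
    have h : π₀ k ∈ B (n - ((k : ℕ) + 1)) \ B (n - (k : ℕ)) := by
      rw [hπ₀ k]; exact mem_singleton_self _
    exact ⟨(mem_sdiff.mp h).1, (mem_sdiff.mp h).2⟩
  have hinj : Function.Injective π₀ := by
    have key : ∀ k k' : Fin n, (k : ℕ) < (k' : ℕ) → π₀ k ≠ π₀ k' := by
      intro k k' hlt he
      have hk' := k'.isLt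
      have h1 : B (n - ((k : ℕ) + 1)) ⊆ B (n - (k' : ℕ)) := hanti _ _ (by omega) (by omega)
      have h2 : π₀ k ∈ B (n - (k' : ℕ)) := h1 (hπmem k).1
      rw [he] at h2
      exact (hπmem k').2 h2
    intro k k' he
    by_contra hne
    have hne' : (k : ℕ) ≠ (k' : ℕ) := fun h => hne (Fin.ext h)
    rcases Nat.lt_or_ge (k : ℕ) (k' : ℕ) with h | h
    · exact key k k' h he
    · exact key k' k (by omega) he.symm
  refine ⟨Equiv.ofBijective π₀ (Finite.injective_iff_bijective.mp hinj), ?_⟩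
  intro k
  have hk := k.isLt
  have himg : (Finset.univ.filter (fun i => i ≤ k)).image π₀ = B (n - ((k : ℕ) + 1)) := by
    apply Finset.eq_of_subset_of_card_le
    · intro x hx
      obtain ⟨i, hi, rfl⟩ := mem_image.mp hx
      have hik : (i : ℕ) ≤ (k : ℕ) := (mem_filter.mp hi).2
      have h1 : B (n - ((i : ℕ) + 1)) ⊆ B (n - ((k : ℕ) + 1)) :=
        hanti _ _ (by omega) (by omega)
      exact h1 (hπmem i).1
    · rw [hcard _ (by omega), Finset.card_image_of_injective _ hinj]
      rw [show Finset.univ.filter (fun i => i ≤ k) = Finset.Iic k from by ext; simp,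
        Fin.card_Iic]
      omega
  have hsum_eq : ∑ i ∈ Finset.univ.filter (fun i => i ≤ k),
      v ((Equiv.ofBijective π₀ (Finite.injective_iff_bijective.mp hinj)) i)
      = ∑ j ∈ B (n - ((k : ℕ) + 1)), v j := by
    rw [← himg, Finset.sum_image (fun a _ b _ h => hinj h)]
    exact Finset.sum_congr rfl (fun i _ => by rw [Equiv.ofBijective_apply])
  rw [hsum_eq]
  rcases le_or_gt m ((B (n - ((k : ℕ) + 1))).card) with hc | hc
  · refine bound_good N h0 hN_nonneg hN_smul hN_add Δ v hv _ (hgood _ (by omega) ?_)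
    rw [hcard _ (by omega)] at hc
    omega
  · exact bound_triv N h0 hN_add Δ hΔ v hv _ (by omega)
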